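/- If κ is an ordinal and there is a transitive set W with κ ∈ W such that V_κ ≺ W is a proper elementary extension (in particular, if V_κ ≺ V_γ for some γ > κ), then κ is a strong limit cardinal. -/

import Mathlib

open FirstOrder Language

namespace SUP

/-! ### The von Neumann hierarchy inside `ZFSet` -/

/-- The von Neumann ordinal corresponding to an `Ordinal`, as a `ZFSet`. -/
noncomputable def vN (o : Ordinal.{0}) : ZFSet.{0} :=
  ZFSet.range fun i : o.ToType => vN ((Ordinal.ToType.mk (o := o)).symm i).1
termination_by o
decreasing_by exact ((Ordinal.ToType.mk (o := o)).symm i).2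

/-- The rank-initial segment `V_α` of the universe of ZF sets. -/
def Vrank (α : Ordinal.{0}) : Set ZFSet.{0} := {x | x.rank < α}

/-- `H_κ`: the class of sets whose hereditary size is less than the cardinal `κ`. -/
def Hset (κ : Cardinal.{0}) : Set ZFSet.{0} :=
  {x | ∃ t : ZFSet.{0}, t.IsTransitive ∧ x ∈ t ∧ Cardinal.mk t.toSet < Cardinal.lift.{1} κ}

/-- An ordinal is inaccessible when it is (the ordinal of) an inaccessible cardinal. -/
def IsInaccOrd (γ : Ordinal.{0}) : Prop := γ.card.IsInaccessible ∧ γ.card.ord = γ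

/-- A cardinal `κ` is weakly compact: it is inaccessible and every 2-coloring of pairs
from `κ` admits a homogeneous set of size `κ`. -/
def IsWeaklyCompactCard (κ : Cardinal.{0}) : Prop :=
  κ.IsInaccessible ∧ ∀ f : κ.ord.ToType → κ.ord.ToType → Bool,
    ∃ H : Set κ.ord.ToType, Cardinal.mk H = κ ∧
      ∃ b : Bool, ∀ x ∈ H, ∀ y ∈ H, x < y → f x y = b

/-- An ordinal is weakly compact when it is (the ordinal of) a weakly compact cardinal. -/
def IsWCOrd (γ : Ordinal.{0}) : Prop := IsWeaklyCompactCard γ.card ∧ γ.card.ord = γ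

/-! ### Languages -/

/-- The language of set theory: one binary relation `∈`. -/
def memL : FirstOrder.Language.{0, 0} :=
  ⟨fun _ => Empty, fun n => match n with | 2 => Unit | _ => Empty⟩

/-- The language of set theory with an additional unary predicate. -/
def predL : FirstOrder.Language.{0, 0} :=
  ⟨fun _ => Empty, fun n => match n with | 1 => Unit | 2 => Unit | _ => Empty⟩

/-- The language of set theory with an additional unary predicate
and an additional binary relation (the graph of a partial function). -/
def pfL : FirstOrder.Language.{0, 0} :=
  ⟨fun _ => Empty, fun n => match n with | 1 => Unit | 2 => Bool | _ => Empty⟩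

def memSym : memL.Relations 2 := Unit.unit

/-! ### Structures -/

/-- The `∈`-structure on a collection `S` of ZF sets. -/
def strMem (S : Set ZFSet.{0}) : memL.Structure S where
  funMap {n} F _ := F.elim
  RelMap {n} r v :=
    match n, r, v with
    | 2, _, v => (v 0 : ZFSet) ∈ (v 1 : ZFSet)
    | 0, r, _ => r.elim
    | 1, r, _ => r.elim
    | _ + 3, r, _ => r.elim

/-- The structure `⟨S, ∈, A⟩` on a collection `S` of ZF sets with predicate `A`. -/
def strPred (S A : Set ZFSet.{0}) : predL.Structure S where
  funMap {n} F _ := F.elim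
  RelMap {n} r v :=
    match n, r, v with
    | 1, _, v => (v 0 : ZFSet) ∈ A
    | 2, _, v => (v 0 : ZFSet) ∈ (v 1 : ZFSet)
    | 0, r, _ => r.elim
    | _ + 3, r, _ => r.elim

/-- The structure `⟨S, ∈, A, f⟩` on a collection `S` of ZF sets with predicate `A` and
(the graph of) a partial function `f` defined on the ordinals below `d`. -/
def strPF (S A : Set ZFSet.{0}) (f : Ordinal.{0} → ZFSet.{0}) (d : Ordinal.{0}) :
    pfL.Structure S where
  funMap {n} F _ := F.elim
  RelMap {n} r v :=
    match n, r, v with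
    | 1, _, v => (v 0 : ZFSet) ∈ A
    | 2, b, v =>
      match b with
      | false => (v 0 : ZFSet) ∈ (v 1 : ZFSet)
      | true => ∃ α : Ordinal.{0}, α < d ∧ (v 0 : ZFSet) = vN α ∧ (v 1 : ZFSet) = f α
    | 0, r, _ => r.elim
    | _ + 3, r, _ => r.elim

/-! ### Elementary extensions and embeddings -/

/-- `⟨S,∈⟩` is an elementary substructure of `⟨T,∈⟩`: the inclusion is elementary. -/
def MemExt (S T : Set ZFSet.{0}) : Prop :=
  ∃ h : S ⊆ T, ∀ (n : ℕ) (φ : memL.Formula (Fin n)) (v : Fin n → S),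
    (letI := strMem S; φ.Realize v) ↔
      (letI := strMem T; φ.Realize fun i => (⟨(v i : ZFSet), h (v i).2⟩ : T))

/-- `⟨S,∈,A⟩` is an elementary substructure of `⟨T,∈,B⟩`: the inclusion is elementary. -/
def PredExt (S A T B : Set ZFSet.{0}) : Prop :=
  ∃ h : S ⊆ T, ∀ (n : ℕ) (φ : predL.Formula (Fin n)) (v : Fin n → S),
    (letI := strPred S A; φ.Realize v) ↔
      (letI := strPred T B; φ.Realize fun i => (⟨(v i : ZFSet), h (v i).2⟩ : T))

/-- `⟨S,∈,A,f⟩` is an elementary substructure of `⟨T,∈,B,g⟩`: the inclusion is elementary. -/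
def PFExt (S A : Set ZFSet.{0}) (f : Ordinal.{0} → ZFSet.{0}) (d : Ordinal.{0})
    (T B : Set ZFSet.{0}) (g : Ordinal.{0} → ZFSet.{0}) (e : Ordinal.{0}) : Prop :=
  ∃ h : S ⊆ T, ∀ (n : ℕ) (φ : pfL.Formula (Fin n)) (v : Fin n → S),
    (letI := strPF S A f d; φ.Realize v) ↔
      (letI := strPF T B g e; φ.Realize fun i => (⟨(v i : ZFSet), h (v i).2⟩ : T))

/-- An elementary embedding (for the language of set theory) of `⟨S,∈⟩` into `⟨T,∈⟩`,
given by (the restriction to `S` of) a function `j`. -/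
structure ElemEmb (S T : Set ZFSet.{0}) (j : ZFSet.{0} → ZFSet.{0}) : Prop where
  maps_mem : ∀ x ∈ S, j x ∈ T
  elem : ∀ (n : ℕ) (φ : memL.Formula (Fin n)) (v : Fin n → S),
    (letI := strMem S; φ.Realize v) ↔
      (letI := strMem T; φ.Realize fun i => (⟨j (v i), maps_mem _ (v i).2⟩ : T))

end SUP
namespace SUP
open FirstOrder Language

/-! ### The ZFC axioms, as sentences in the language of set theory -/

/-- The atomic formula `xᵢ ∈ xⱼ`. -/
def mF {n : ℕ} (i j : Fin n) : memL.BoundedFormula Empty n :=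
  memSym.boundedFormula₂ (Term.var (Sum.inr i)) (Term.var (Sum.inr j))

/-- The atomic formula `xᵢ = xⱼ`. -/
def eF {n : ℕ} (i j : Fin n) : memL.BoundedFormula Empty n :=
  Term.bdEqual (Term.var (Sum.inr i)) (Term.var (Sum.inr j))

/-- Extensionality: `∀x∀y ((∀z (z∈x ↔ z∈y)) → x=y)`. -/
def axExt : memL.Sentence :=
  ((((mF 2 0 ⇔ mF 2 1).all ⟹ eF 0 1).all).all)

/-- Empty set: `∃x ∀z (z ∉ x)`. -/
def axEmpty : memL.Sentence := (((∼(mF 1 0)).all).ex)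

/-- Pairing: `∀x∀y∃p∀z (z∈p ↔ (z=x ∨ z=y))`. -/
def axPair : memL.Sentence :=
  ((((((mF 3 2 ⇔ (eF 3 0 ⊔ eF 3 1)).all).ex).all).all))

/-- Union: `∀x∃u∀z (z∈u ↔ ∃w (w∈x ∧ z∈w))`. -/
def axUnion : memL.Sentence :=
  ((((mF 2 1 ⇔ ((mF 3 0 ⊓ mF 2 3).ex)).all).ex).all)

/-- Power set: `∀x∃p∀z (z∈p ↔ ∀w (w∈z → w∈x))`. -/
def axPow : memL.Sentence :=
  ((((mF 2 1 ⇔ ((mF 3 2 ⟹ mF 3 0).all)).all).ex).all)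

/-- Foundation: `∀x (∃y (y∈x) → ∃y (y∈x ∧ ∀z (z∈x → z∉y)))`. -/
def axFound : memL.Sentence :=
  (((mF 1 0).ex ⟹ ((mF 1 0 ⊓ ((mF 2 0 ⟹ ∼(mF 2 1)).all)).ex)).all)

/-- Infinity: `∃I ((∃e (e∈I ∧ ∀z (z∉e))) ∧ ∀x (x∈I → ∃s (s∈I ∧ ∀z (z∈s ↔ (z∈x ∨ z=x)))))`. -/
def axInf : memL.Sentence :=
  ((((mF 1 0 ⊓ ((∼(mF 2 1)).all)).ex) ⊓
    ((mF 1 0 ⟹ (((mF 2 0) ⊓ (((mF 3 2) ⇔ ((mF 3 1) ⊔ (eF 3 1))).all)).ex)).all)).ex)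

/-- In context `n`, the formula `xᵢ = {xₐ}` (a singleton). -/
def singF {n : ℕ} (i a : Fin n) : memL.BoundedFormula Empty n :=
  ((mF (Fin.last n) i.castSucc ⇔ eF (Fin.last n) a.castSucc).all)

/-- In context `n`, the formula `xᵢ = {xₐ, x_b}`. -/
def upairF {n : ℕ} (i a b : Fin n) : memL.BoundedFormula Empty n :=
  ((mF (Fin.last n) i.castSucc ⇔ (eF (Fin.last n) a.castSucc ⊔ eF (Fin.last n) b.castSucc)).all)

/-- In context `n`, the formula `xᵢ = ⟨xₐ, x_b⟩` (Kuratowski pair). -/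
def opairF {n : ℕ} (i a b : Fin n) : memL.BoundedFormula Empty n :=
  (((mF (Fin.last n) i.castSucc) ⇔
    ((singF (Fin.last n) a.castSucc) ⊔ (upairF (Fin.last n) a.castSucc b.castSucc))).all)

/-- In context `n`, the formula `⟨xₐ, x_b⟩ ∈ xᵣ`. -/
def opMemF {n : ℕ} (a b r : Fin n) : memL.BoundedFormula Empty n :=
  (((mF (Fin.last n) r.castSucc) ⊓ (opairF (Fin.last n) a.castSucc b.castSucc)).ex)

/-- The well-ordering principle (the form of the axiom of choice appropriate for `ZFC⁻`):
every set admits a well-order. -/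
def woTot : memL.BoundedFormula Empty 2 :=
  ((((mF 2 0 ⊓ mF 3 0) ⟹ ((eF 2 3) ⊔ ((opMemF 2 3 1) ⊔ (opMemF 3 2 1)))).all).all)

def woTrans : memL.BoundedFormula Empty 2 :=
  (((((opMemF 2 3 1 ⊓ opMemF 3 4 1) ⟹ opMemF 2 4 1).all).all).all)

def woIrr : memL.BoundedFormula Empty 2 :=
  (((mF 2 0) ⟹ ∼(opMemF 2 2 1)).all)

def woLeast : memL.BoundedFormula Empty 2 :=
  (((((mF 3 2 ⟹ mF 3 0).all) ⊓ ((mF 3 2).ex)) ⟹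
      (((mF 3 2) ⊓ (((mF 4 2) ⟹ ∼(opMemF 4 3 1)).all)).ex)).all)

/-- The well-ordering principle (the form of the axiom of choice appropriate for `ZFC⁻`):
every set admits a well-order. -/
def axWO : memL.Sentence := (((woTot ⊓ woTrans ⊓ woIrr ⊓ woLeast).ex).all)

/-- The separation axiom for the formula `φ`, whose free variables are:
`n` parameters, then the ambient set (variable `n`), then the element variable `n+1`. -/
def sepAx (n : ℕ) (φ : memL.BoundedFormula Empty (n + 2)) : memL.Sentence :=
  -- ∀ params ∀a ∃b ∀z (z ∈ b ↔ (z ∈ a ∧ φ))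
  ((((mF ⟨n+2, by omega⟩ ⟨n+1, by omega⟩ ⇔
      ((mF ⟨n+2, by omega⟩ ⟨n, by omega⟩) ⊓ (φ.liftAt 1 (n+1)))).all).ex).all).alls

/-- The collection axiom for the formula `φ`, whose free variables are:
`n` parameters, then the ambient set (variable `n`), then variables `n+1`, `n+2`
standing for an element of the ambient set and a corresponding witness. -/
def collAx (n : ℕ) (φ : memL.BoundedFormula Empty (n + 3)) : memL.Sentence :=
  -- ∀ params ∀a ((∀z (z∈a → ∃w φ)) → ∃b ∀z (z∈a → ∃w (w∈b ∧ φ)))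
  let lhs : memL.BoundedFormula Empty (n + 1) :=
    ((mF ⟨n+1, by omega⟩ ⟨n, by omega⟩ ⟹ φ.ex).all)
  let rhs : memL.BoundedFormula Empty (n + 1) :=
    (((mF ⟨n+2, by omega⟩ ⟨n, by omega⟩ ⟹
        ((mF ⟨n+3, by omega⟩ ⟨n+1, by omega⟩ ⊓ (φ.liftAt 1 (n+1))).ex)).all).ex)
  (((lhs ⟹ rhs).all).alls)

/-- The theory `ZFC⁻`: ZFC without the power set axiom, with collection and with the
well-ordering principle as the form of choice. -/
def ZFCminus : memL.Theory :=
  {axExt, axEmpty, axPair, axUnion, axFound, axInf, axWO} ∪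
    (Set.range fun p : (n : ℕ) × memL.BoundedFormula Empty (n + 2) => sepAx p.1 p.2) ∪
    (Set.range fun p : (n : ℕ) × memL.BoundedFormula Empty (n + 3) => collAx p.1 p.2)

/-- The theory `ZFC`. -/
def ZFC : memL.Theory := insert axPow ZFCminus

/-- The set `M`, equipped with `∈`, satisfies the theory `T`. -/
def SatT (M : ZFSet.{0}) (T : memL.Theory) : Prop :=
  ∀ σ ∈ T, (letI := strMem M.toSet; Sentence.Realize (M := M.toSet) σ)

end SUP
namespace SUP
open FirstOrder Language

/-! ### Strongly uplifting cardinals -/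

/-- `κ` is strongly `θ`-uplifting: `κ` is inaccessible, and for every `A ⊆ κ` there is an
inaccessible `γ ≥ θ` and `A* ⊆ γ` with `⟨V_κ,∈,A⟩ ≺ ⟨V_γ,∈,A*⟩` a proper elementary
extension. -/
def SUplift (κ θ : Ordinal.{0}) : Prop :=
  IsInaccOrd κ ∧ ∀ A : Set Ordinal.{0}, A ⊆ Set.Iio κ →
    ∃ γ : Ordinal.{0}, θ ≤ γ ∧ IsInaccOrd γ ∧ κ < γ ∧
      ∃ B : Set Ordinal.{0}, B ⊆ Set.Iio γ ∧ PredExt (Vrank κ) (vN '' A) (Vrank γ) (vN '' B)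

/-- `κ` is strongly pseudo `θ`-uplifting: for every `A ⊆ κ` there is an
ordinal `γ ≥ θ` (not necessarily inaccessible) and `A* ⊆ γ` with
`⟨V_κ,∈,A⟩ ≺ ⟨V_γ,∈,A*⟩` a proper elementary extension. -/
def SPUplift (κ θ : Ordinal.{0}) : Prop :=
  ∀ A : Set Ordinal.{0}, A ⊆ Set.Iio κ →
    ∃ γ : Ordinal.{0}, θ ≤ γ ∧ κ < γ ∧
      ∃ B : Set Ordinal.{0}, B ⊆ Set.Iio γ ∧ PredExt (Vrank κ) (vN '' A) (Vrank γ) (vN '' B)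

/-- `κ` is strongly uplifting: strongly `θ`-uplifting for every `θ`. -/
def StronglyUplifting (κ : Ordinal.{0}) : Prop := ∀ θ, SUplift κ θ

/-- `κ` is strongly pseudo uplifting: strongly pseudo `θ`-uplifting for every `θ`. -/
def StronglyPseudoUplifting (κ : Ordinal.{0}) : Prop := ∀ θ, SPUplift κ θ

/-! ### κ-models and unfoldability embeddings -/

/-- A `κ`-model: a transitive set of size `κ`, containing `κ`, closed under `<κ`-sequences,
and satisfying `ZFC⁻`. -/
structure IsKappaModel (κ : Cardinal.{0}) (M : ZFSet.{0}) : Prop where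
  transitive : M.IsTransitive
  card_eq : Cardinal.mk M.toSet = Cardinal.lift.{1} κ
  kappa_mem : vN κ.ord ∈ M
  seq_closed : ∀ β : Ordinal.{0}, β < κ.ord → ∀ f : ZFSet.{0}, ZFSet.IsFunc (vN β) M f → f ∈ M
  zfc_minus : SatT M ZFCminus

/-- `κ` is superstrongly `θ`-unfoldable: for each `A ∈ H_{κ⁺}` there is a `κ`-model `M ⊨ ZFC`
with `A ∈ M` and a transitive set `N` with an elementary embedding `j : M → N` with critical
point `κ`, `j(κ) ≥ θ`, and `V_{j(κ)} ⊆ N`. -/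
def SSUnfold (κ : Cardinal.{0}) (θ : Ordinal.{0}) : Prop :=
  κ.IsInaccessible ∧ ∀ A : ZFSet.{0}, A ∈ Hset (Order.succ κ) →
    ∃ M : ZFSet.{0}, IsKappaModel κ M ∧ SatT M ZFC ∧ A ∈ M ∧
      ∃ N : ZFSet.{0}, N.IsTransitive ∧
        ∃ j : ZFSet.{0} → ZFSet.{0}, ElemEmb M.toSet N.toSet j ∧
          (∀ β : Ordinal.{0}, β < κ.ord → j (vN β) = vN β) ∧
          ∃ γ : Ordinal.{0}, j (vN κ.ord) = vN γ ∧ κ.ord < γ ∧ θ ≤ γ ∧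
            Vrank γ ⊆ N.toSet

/-- `κ` is almost-hugely `θ`-unfoldable: for each `A ∈ H_{κ⁺}` there is a `κ`-model `M ⊨ ZFC`
with `A ∈ M` and a transitive set `N` with an elementary embedding `j : M → N` with critical
point `κ`, `j(κ) ≥ θ`, and `N^{<j(κ)} ⊆ N`. -/
def AHUnfold (κ : Cardinal.{0}) (θ : Ordinal.{0}) : Prop :=
  κ.IsInaccessible ∧ ∀ A : ZFSet.{0}, A ∈ Hset (Order.succ κ) →
    ∃ M : ZFSet.{0}, IsKappaModel κ M ∧ SatT M ZFC ∧ A ∈ M ∧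
      ∃ N : ZFSet.{0}, N.IsTransitive ∧
        ∃ j : ZFSet.{0} → ZFSet.{0}, ElemEmb M.toSet N.toSet j ∧
          (∀ β : Ordinal.{0}, β < κ.ord → j (vN β) = vN β) ∧
          ∃ γ : Ordinal.{0}, j (vN κ.ord) = vN γ ∧ κ.ord < γ ∧ θ ≤ γ ∧
            ∀ β : Ordinal.{0}, β < γ → ∀ f : ZFSet.{0}, ZFSet.IsFunc (vN β) N f → f ∈ N

/-- `κ` is superstrongly unfoldable. -/
def SuperstronglyUnfoldable (κ : Cardinal.{0}) : Prop := ∀ θ, SSUnfold κ θ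

/-- `κ` is almost-hugely unfoldable. -/
def AlmostHugelyUnfoldable (κ : Cardinal.{0}) : Prop := ∀ θ, AHUnfold κ θ

/-! ### Clubs, subtlety, degrees of strong unfoldability, ordinal definability -/

/-- `C` is a closed unbounded subset of `κ`. -/
def IsClubIn (C : Set Ordinal.{0}) (κ : Ordinal.{0}) : Prop :=
  C ⊆ Set.Iio κ ∧ (∀ θ < κ, ∃ δ ∈ C, θ ≤ δ) ∧
    ∀ θ < κ, 0 < θ → (∀ β < θ, ∃ δ ∈ C, β ≤ δ ∧ δ < θ) → θ ∈ C

/-- `δ` is subtle: for every club `C ⊆ δ` and every sequence `⟨A_α : α ∈ C⟩` with `A_α ⊆ α`,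
there are `α < β` in `C` with `A_α = A_β ∩ α`. -/
def IsSubtle (δ : Ordinal.{0}) : Prop :=
  ∀ C : Set Ordinal.{0}, IsClubIn C δ →
    ∀ A : Ordinal.{0} → Set Ordinal.{0}, (∀ α ∈ C, A α ⊆ Set.Iio α) →
      ∃ α ∈ C, ∃ β ∈ C, α < β ∧ A α = A β ∩ Set.Iio α

/-- Application of a set-theoretic function (coded as a set of Kuratowski pairs). -/
noncomputable def zApp (f x : ZFSet.{0}) : ZFSet.{0} :=
  letI := Classical.dec (∃ y, ZFSet.pair x y ∈ f)
  if h : ∃ y, ZFSet.pair x y ∈ f then h.choose else ∅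

/-- `κ` is strongly `θ`-unfoldable of degree `α`, relativized to the (transitive) universe `U`:
for each ordinal `θ` in `U` and each `A ∈ H_{κ⁺} ∩ U` there is a `κ`-model `M ∈ U` satisfying
`ZFC` with `A ∈ M`, and a transitive set `N ∈ U` with `α ∈ N` and an elementary embedding
`j : M → N` in `U` with critical point `κ`, `j(κ) > max(θ,α)` and `V_θ ⊆ N`, such that `κ`
is strongly unfoldable of every degree `β < α` in `N`.  Taking `U` to be the class of all
sets gives the unrelativized notion. -/
def DegUnfold (κ : Cardinal.{0}) (α : Ordinal.{0}) (U : Set ZFSet.{0}) : Prop :=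
  ∀ θ : Ordinal.{0}, vN θ ∈ U →
    ∀ A : ZFSet.{0}, A ∈ U → A ∈ Hset (Order.succ κ) →
      ∃ M : ZFSet.{0}, M ∈ U ∧ IsKappaModel κ M ∧ SatT M ZFC ∧ A ∈ M ∧
        ∃ N : ZFSet.{0}, N ∈ U ∧ N.IsTransitive ∧ vN α ∈ N ∧
          ∃ j : ZFSet.{0}, j ∈ U ∧ ZFSet.IsFunc M N j ∧
            ElemEmb M.toSet N.toSet (zApp j) ∧
            (∀ β : Ordinal.{0}, β < κ.ord → zApp j (vN β) = vN β) ∧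
            (∃ γ : Ordinal.{0}, zApp j (vN κ.ord) = vN γ ∧ θ < γ ∧ α < γ) ∧
            Vrank θ ⊆ N.toSet ∧
            ∀ β : Ordinal.{0}, β < α → DegUnfold κ β N.toSet
termination_by α
decreasing_by exact ‹β < α›

/-- `x` is ordinal definable: it is the unique set satisfying some first-order formula
with ordinal parameters in some rank-initial segment `V_η` of the universe. -/
def IsOD (x : ZFSet.{0}) : Prop :=
  ∃ (η : Ordinal.{0}) (k : ℕ) (φ : memL.Formula (Fin (k + 1))) (p : Fin k → Ordinal.{0}),
    x ∈ Vrank η ∧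
    ∃ hp : ∀ i, vN (p i) ∈ Vrank η,
      ∀ y : (Vrank η : Set ZFSet.{0}),
        (letI := strMem (Vrank η);
          Formula.Realize φ (Fin.cases y fun i => (⟨vN (p i), hp i⟩ : Vrank η))) ↔
        (y : ZFSet.{0}) = x

end SUP

namespace SUP
open FirstOrder Language

attribute [local instance] strMem


theorem mem_vN {x : ZFSet.{0}} {o : Ordinal.{0}} : x ∈ vN o ↔ ∃ β < o, x = vN β := by
  rw [vN, ZFSet.mem_range]
  constructor
  · rintro ⟨i, rfl⟩
    exact ⟨_, ((Ordinal.ToType.mk (o := o)).symm i).2, rfl⟩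
  · rintro ⟨β, hβ, rfl⟩
    exact ⟨Ordinal.ToType.mk (o := o) ⟨β, hβ⟩, by simp⟩

theorem vN_mem_vN {a b : Ordinal.{0}} (h : a < b) : vN a ∈ vN b :=
  mem_vN.2 ⟨a, h, rfl⟩

theorem rank_vN : ∀ o : Ordinal.{0}, (vN o).rank = o := by
  intro o
  induction o using Ordinal.induction with
  | _ o IH =>
    apply le_antisymm
    · rw [ZFSet.rank_le_iff]
      rintro y hy
      obtain ⟨β, hβ, rfl⟩ := mem_vN.1 hy
      rwa [IH β hβ]
    · by_contra h
      push_neg at h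
      have h2 := ZFSet.rank_lt_of_mem (vN_mem_vN h)
      rw [IH _ h] at h2
      exact lt_irrefl _ h2

theorem vN_injective : Function.Injective vN := by
  intro a b h
  have := rank_vN a
  rw [h, rank_vN] at this
  exact this.symm

theorem vN_mem_vN_iff {a b : Ordinal.{0}} : vN a ∈ vN b ↔ a < b := by
  refine ⟨fun h => ?_, vN_mem_vN⟩
  have := ZFSet.rank_lt_of_mem h
  rwa [rank_vN, rank_vN] at this

theorem vN_transitive {o : Ordinal.{0}} {x : ZFSet.{0}} (hx : x ∈ vN o) : ∀ y ∈ x, y ∈ vN o := by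
  intro y hy
  obtain ⟨β, hβ, rfl⟩ := mem_vN.1 hx
  obtain ⟨γ, hγ, rfl⟩ := mem_vN.1 hy
  exact vN_mem_vN (hγ.trans hβ)

/-- Every transitive, `∈`-trichotomous ZF set is a von Neumann ordinal. -/
theorem exists_eq_vN {d : ZFSet.{0}}
    (htr : ∀ y ∈ d, ∀ z ∈ y, z ∈ d)
    (htri : ∀ a ∈ d, ∀ b ∈ d, a ∈ b ∨ a = b ∨ b ∈ a) : ∃ δ, d = vN δ := by
  induction d using ZFSet.inductionOn with
  | _ d IH =>
    -- every member of d is a von Neumann ordinal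
    have hmem : ∀ y ∈ d, ∃ γ, y = vN γ := by
      intro y hy
      apply IH y hy
      · intro z hz u hu
        -- u ∈ z ∈ y ; z ∈ d by htr, u ∈ d by htr; trichotomy u vs y
        have hzd : z ∈ d := htr y hy z hz
        have hud : u ∈ d := htr z hzd u hu
        rcases htri u hud y hy with h | h | h
        · exact h
        · exfalso
          subst h
          have h1 := ZFSet.rank_lt_of_mem hu
          have h2 := ZFSet.rank_lt_of_mem hz
          exact lt_irrefl _ (h1.trans h2)
        · exfalso
          have h1 := ZFSet.rank_lt_of_mem h
          have h2 := ZFSet.rank_lt_of_mem hu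
          have h3 := ZFSet.rank_lt_of_mem hz
          exact lt_irrefl _ ((h1.trans h2).trans h3)
      · intro a ha b hb
        exact htri a (htr y hy a ha) b (htr y hy b hb)
    -- δ := least ordinal with vN δ ∉ d
    have hne : {δ : Ordinal.{0} | vN δ ∉ d}.Nonempty := by
      refine ⟨d.rank, fun hmem' => ?_⟩
      have := ZFSet.rank_lt_of_mem hmem'
      rw [rank_vN] at this
      exact lt_irrefl _ this
    set δ := sInf {δ : Ordinal.{0} | vN δ ∉ d} with hδ
    have hδ_not : vN δ ∉ d := csInf_mem hne
    have hδ_lt : ∀ γ < δ, vN γ ∈ d := by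
      intro γ hγ
      by_contra hc
      have : δ ≤ γ := csInf_le' (show γ ∈ {δ : Ordinal.{0} | vN δ ∉ d} from hc)
      exact absurd this (not_le_of_gt hγ)
    refine ⟨δ, ZFSet.ext fun z => ?_⟩
    constructor
    · intro hz
      obtain ⟨γ, rfl⟩ := hmem z hz
      rw [mem_vN]
      refine ⟨γ, ?_, rfl⟩
      by_contra hge
      push_neg at hge
      rcases hge.lt_or_eq with h | h
      · exact hδ_not (htr _ hz _ (vN_mem_vN h))
      · exact hδ_not (h ▸ hz)
    · intro hz
      obtain ⟨γ, hγ, rfl⟩ := mem_vN.1 hz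
      exact hδ_lt γ hγ

theorem mem_Vrank {x : ZFSet.{0}} {α : Ordinal.{0}} : x ∈ Vrank α ↔ x.rank < α := Iff.rfl

theorem Vrank_transitive {α : Ordinal.{0}} {x : ZFSet.{0}} (hx : x ∈ Vrank α) :
    ∀ y ∈ x, y ∈ Vrank α := fun y hy => (ZFSet.rank_lt_of_mem hy).trans hx

theorem rank_pair_le {x y : ZFSet.{0}} :
    (ZFSet.pair x y).rank ≤ max x.rank y.rank + 2 := by
  have : (ZFSet.pair x y) = ({{x}, {x, y}} : ZFSet) := rfl
  rw [this, ZFSet.rank_pair, ZFSet.rank_singleton, ZFSet.rank_pair]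
  simp only [Order.succ_eq_add_one]
  rcases le_total x.rank y.rank with h | h
  · rw [max_eq_right (add_le_add_left h 1), max_eq_right h,
      max_eq_right (add_le_add_left (add_le_add_left h 1) 1)]
    rw [add_assoc]
    norm_num
  · rw [max_eq_left (add_le_add_left h 1), max_eq_left h, max_self]
    rw [add_assoc]
    norm_num



section Toolkit

variable {α : Type} {n : ℕ}

/-- bound variable term -/
def bvT (k : Fin n) : memL.Term (α ⊕ Fin n) := Term.var (Sum.inr k)

/-- free variable term -/
def fvT (a : α) : memL.Term (α ⊕ Fin n) := Term.var (Sum.inl a)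

/-- atomic membership formula -/
def memB (t u : memL.Term (α ⊕ Fin n)) : memL.BoundedFormula α n :=
  memSym.boundedFormula₂ t u

variable {S : Set ZFSet.{0}}

theorem realize_memB {v : α → S} {xs : Fin n → S} {t u : memL.Term (α ⊕ Fin n)} :
    (memB t u).Realize v xs ↔
      ((Term.realize (M := S) (Sum.elim v xs) t : S) : ZFSet)
        ∈ ((Term.realize (M := S) (Sum.elim v xs) u : S) : ZFSet) := by
  rw [memB, BoundedFormula.realize_rel₂]
  exact Iff.rfl

/-- `x_u = {x_a, x_b}` -/
def zupairB (u a b : Fin n) : memL.BoundedFormula α n :=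
  ((memB (bvT (Fin.last n)) (bvT u.castSucc)).iff
    ((Term.bdEqual (bvT (Fin.last n)) (bvT a.castSucc)) ⊔
      (Term.bdEqual (bvT (Fin.last n)) (bvT b.castSucc)))).all

theorem realize_zupairB (hS : ∀ x ∈ S, ∀ y ∈ x, y ∈ S)
    {v : α → S} {xs : Fin n → S} {u a b : Fin n} :
    (zupairB u a b).Realize v xs ↔
      ((xs u : ZFSet) = {(xs a : ZFSet), (xs b : ZFSet)}) := by
  simp only [zupairB, BoundedFormula.realize_all, BoundedFormula.realize_iff,
    BoundedFormula.realize_sup, realize_memB, BoundedFormula.realize_bdEqual,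
    bvT, Term.realize_var, Sum.elim_inr, Fin.snoc_last, Fin.snoc_castSucc]
  constructor
  · intro h
    apply ZFSet.ext
    intro z
    rw [ZFSet.mem_pair]
    constructor
    · intro hz
      have hzS : z ∈ S := hS _ (xs u).2 z hz
      have := (h ⟨z, hzS⟩).1 hz
      simpa [Subtype.ext_iff] using this
    · rintro (rfl | rfl)
      · exact (h (xs a)).2 (Or.inl rfl)
      · exact (h (xs b)).2 (Or.inr rfl)
  · intro h c
    rw [h, ZFSet.mem_pair]
    constructor
    · rintro (h1 | h1) <;> [left; right] <;> exact Subtype.ext h1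
    · rintro (rfl | rfl) <;> [left; right] <;> rfl

theorem upair_self (x : ZFSet.{0}) : ({x, x} : ZFSet) = {x} := by
  apply ZFSet.ext
  intro z
  simp [ZFSet.mem_pair]

/-- `x_p = ⟨x_a, x_b⟩` (Kuratowski) -/
def zopairB (p a b : Fin n) : memL.BoundedFormula α n :=
  ((zupairB ((Fin.last n).castSucc) a.castSucc.castSucc a.castSucc.castSucc ⊓
    (zupairB (Fin.last (n+1)) a.castSucc.castSucc b.castSucc.castSucc ⊓
      zupairB p.castSucc.castSucc ((Fin.last n).castSucc) (Fin.last (n+1)))).ex).ex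

theorem realize_zopairB (hS : ∀ x ∈ S, ∀ y ∈ x, y ∈ S)
    (hP : ∀ x ∈ S, ∀ y ∈ S, ({x, y} : ZFSet) ∈ S)
    {v : α → S} {xs : Fin n → S} {p a b : Fin n} :
    (zopairB p a b).Realize v xs ↔
      ((xs p : ZFSet) = ZFSet.pair (xs a : ZFSet) (xs b : ZFSet)) := by
  simp only [zopairB, BoundedFormula.realize_ex, BoundedFormula.realize_inf,
    realize_zupairB hS, Fin.snoc_last, Fin.snoc_castSucc]
  constructor
  · rintro ⟨s, u, h1, h2, h3⟩
    rw [h3, h1, h2, upair_self]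
    rfl
  · intro h
    have hsS : ({(xs a : ZFSet)} : ZFSet) ∈ S := by
      have := hP _ (xs a).2 _ (xs a).2
      rwa [upair_self] at this
    have huS : ({(xs a : ZFSet), (xs b : ZFSet)} : ZFSet) ∈ S := hP _ (xs a).2 _ (xs b).2
    refine ⟨⟨_, hsS⟩, ⟨_, huS⟩, upair_self _ |>.symm, rfl, ?_⟩
    rw [h]
    rfl

/-- `⟨x_a, x_b⟩ ∈ x_r` -/
def opMemB (a b r : Fin n) : memL.BoundedFormula α n :=
  ((memB (bvT (Fin.last n)) (bvT r.castSucc)) ⊓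
    zopairB (Fin.last n) a.castSucc b.castSucc).ex

theorem realize_opMemB (hS : ∀ x ∈ S, ∀ y ∈ x, y ∈ S)
    (hP : ∀ x ∈ S, ∀ y ∈ S, ({x, y} : ZFSet) ∈ S)
    {v : α → S} {xs : Fin n → S} {a b r : Fin n} :
    (opMemB a b r).Realize v xs ↔
      ZFSet.pair (xs a : ZFSet) (xs b : ZFSet) ∈ (xs r : ZFSet) := by
  simp only [opMemB, BoundedFormula.realize_ex, BoundedFormula.realize_inf,
    realize_memB, realize_zopairB hS hP, bvT, Term.realize_var, Sum.elim_inr,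
    Fin.snoc_last, Fin.snoc_castSucc]
  constructor
  · rintro ⟨q, hq1, hq2⟩
    rwa [hq2] at hq1
  · intro h
    exact ⟨⟨_, hS _ (xs r).2 _ h⟩, h, rfl⟩

/-- `⟨x_a, x_b⟩ ∈ (free variable t)` -/
def opMemFv (a b : Fin n) (t : α) : memL.BoundedFormula α n :=
  ((memB (bvT (Fin.last n)) (fvT t)) ⊓
    zopairB (Fin.last n) a.castSucc b.castSucc).ex

theorem realize_opMemFv (hS : ∀ x ∈ S, ∀ y ∈ x, y ∈ S)
    (hP : ∀ x ∈ S, ∀ y ∈ S, ({x, y} : ZFSet) ∈ S)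
    {v : α → S} {xs : Fin n → S} {a b : Fin n} {t : α} :
    (opMemFv a b t).Realize v xs ↔
      ZFSet.pair (xs a : ZFSet) (xs b : ZFSet) ∈ (v t : ZFSet) := by
  simp only [opMemFv, BoundedFormula.realize_ex, BoundedFormula.realize_inf,
    realize_memB, realize_zopairB hS hP, bvT, fvT, Term.realize_var, Sum.elim_inr,
    Sum.elim_inl, Fin.snoc_last, Fin.snoc_castSucc]
  constructor
  · rintro ⟨q, hq1, hq2⟩
    rwa [hq2] at hq1
  · intro h
    exact ⟨⟨_, hS _ (v t).2 _ h⟩, h, rfl⟩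

end Toolkit

section Sentences

variable {S : Set ZFSet.{0}}

/-- "there exists a set" -/
def neF : memL.Formula (Fin 0) :=
  (Term.bdEqual (bvT (0 : Fin 1)) (bvT (0 : Fin 1))).ex

theorem realize_neF {v : Fin 0 → S} : neF.Realize v ↔ Nonempty S := by
  simp only [neF, Formula.Realize, BoundedFormula.realize_ex,
    BoundedFormula.realize_bdEqual]
  exact ⟨fun ⟨a, _⟩ => ⟨a⟩, fun ⟨a⟩ => ⟨a, by trivial⟩⟩

/-- "the parameter is an element of some set" -/
def limF : memL.Formula (Fin 1) :=
  (memB (fvT 0) (bvT (0 : Fin 1))).ex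

theorem realize_limF {v : Fin 1 → S} :
    limF.Realize v ↔ ∃ z : S, (v 0 : ZFSet) ∈ (z : ZFSet) := by
  simp only [limF, Formula.Realize, BoundedFormula.realize_ex, realize_memB,
    bvT, fvT, Term.realize_var, Sum.elim_inr, Sum.elim_inl]
  exact Iff.rfl

/-- the unordered-pairing axiom -/
def upairAx : memL.Formula (Fin 0) :=
  ((zupairB (2 : Fin 3) 0 1).ex.all.all)

theorem realize_upairAx (hS : ∀ x ∈ S, ∀ y ∈ x, y ∈ S) {v : Fin 0 → S} :
    upairAx.Realize v ↔
      ∀ a b : S, ∃ u : S, (u : ZFSet) = {(a : ZFSet), (b : ZFSet)} := by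
  have h2 : (2 : Fin 3) = Fin.last 2 := rfl
  have h0 : (0 : Fin 3) = ((Fin.last 0).castSucc).castSucc := rfl
  have h1 : (1 : Fin 3) = (Fin.last 1).castSucc := rfl
  simp only [upairAx, Formula.Realize, BoundedFormula.realize_all,
    BoundedFormula.realize_ex, realize_zupairB hS, h2, h0, h1,
    Fin.snoc_last, Fin.snoc_castSucc]

/-- transitivity of the (bound variable 0) set `d`, in context 1 -/
def transF : memL.BoundedFormula (Fin 1) 1 :=
  ((((memB (bvT ((Fin.last 1).castSucc)) (bvT (Fin.last 2)) ⊓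
      memB (bvT (Fin.last 2)) (bvT ((Fin.last 0).castSucc.castSucc))) ⟹
    memB (bvT ((Fin.last 1).castSucc)) (bvT ((Fin.last 0).castSucc.castSucc))).all).all)

/-- `∈`-trichotomy on the set `d` (bound variable 0), in context 1 -/
def trichF : memL.BoundedFormula (Fin 1) 1 :=
  ((((memB (bvT ((Fin.last 1).castSucc)) (bvT ((Fin.last 0).castSucc.castSucc)) ⊓
      memB (bvT (Fin.last 2)) (bvT ((Fin.last 0).castSucc.castSucc))) ⟹
    (memB (bvT ((Fin.last 1).castSucc)) (bvT (Fin.last 2)) ⊔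
      (Term.bdEqual (bvT ((Fin.last 1).castSucc)) (bvT (Fin.last 2)) ⊔
        memB (bvT (Fin.last 2)) (bvT ((Fin.last 1).castSucc))))).all).all)

/-- context 3 : d = 0, x = 1, f = 2.  C1: every element γ of d is sent by f
to some b with ⟨b, x⟩ in the free parameter w. -/
def oneC : memL.BoundedFormula (Fin 1) 3 :=
  ((memB (bvT (Fin.last 3)) (bvT ((Fin.last 0).castSucc.castSucc.castSucc)) ⟹
    ((opMemB ((Fin.last 3).castSucc) (Fin.last 4) ((Fin.last 2).castSucc.castSucc) ⊓
      opMemFv (Fin.last 4) ((Fin.last 1).castSucc.castSucc.castSucc) (0 : Fin 1)).ex)).all)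

/-- C2 : f is order preserving from (d, ∈) to w. context 7: d=0,x=1,f=2,γ=3,γ'=4,b=5,b'=6 -/
def twoC : memL.BoundedFormula (Fin 1) 3 :=
  (((((memB (bvT ((Fin.last 3).castSucc.castSucc.castSucc)) (bvT ((Fin.last 4).castSucc.castSucc)) ⊓
      (memB (bvT ((Fin.last 4).castSucc.castSucc)) (bvT ((Fin.last 0).castSucc.castSucc.castSucc.castSucc.castSucc.castSucc)) ⊓
      (opMemB ((Fin.last 3).castSucc.castSucc.castSucc) ((Fin.last 5).castSucc) ((Fin.last 2).castSucc.castSucc.castSucc.castSucc) ⊓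
       opMemB ((Fin.last 4).castSucc.castSucc) (Fin.last 6) ((Fin.last 2).castSucc.castSucc.castSucc.castSucc)))) ⟹
    opMemFv ((Fin.last 5).castSucc) (Fin.last 6) (0 : Fin 1)).all).all).all).all

/-- The main sentence (with one free parameter `w`):
every (set coding an) ordinal embeds into an initial segment of `w`. -/
def sigmaF : memL.Formula (Fin 1) :=
  (((transF ⊓ trichF) ⟹ ((oneC ⊓ twoC).ex).ex).all)

theorem realize_sigmaF (hS : ∀ x ∈ S, ∀ y ∈ x, y ∈ S)
    (hP : ∀ x ∈ S, ∀ y ∈ S, ({x, y} : ZFSet) ∈ S) {v : Fin 1 → S} :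
    sigmaF.Realize v ↔
      ∀ d : S,
        ((∀ a b : S, (a : ZFSet) ∈ (b : ZFSet) ∧ (b : ZFSet) ∈ (d : ZFSet) →
            (a : ZFSet) ∈ (d : ZFSet)) ∧
         (∀ a b : S, (a : ZFSet) ∈ (d : ZFSet) ∧ (b : ZFSet) ∈ (d : ZFSet) →
            (a : ZFSet) ∈ (b : ZFSet) ∨ a = b ∨ (b : ZFSet) ∈ (a : ZFSet))) →
        ∃ x f : S,
          (∀ γ : S, (γ : ZFSet) ∈ (d : ZFSet) →
            ∃ b : S, ZFSet.pair (γ : ZFSet) (b : ZFSet) ∈ (f : ZFSet) ∧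
              ZFSet.pair (b : ZFSet) (x : ZFSet) ∈ (v 0 : ZFSet)) ∧
          (∀ γ γ' b b' : S,
            (γ : ZFSet) ∈ (γ' : ZFSet) ∧
              ((γ' : ZFSet) ∈ (d : ZFSet) ∧
               (ZFSet.pair (γ : ZFSet) (b : ZFSet) ∈ (f : ZFSet) ∧
                ZFSet.pair (γ' : ZFSet) (b' : ZFSet) ∈ (f : ZFSet))) →
            ZFSet.pair (b : ZFSet) (b' : ZFSet) ∈ (v 0 : ZFSet)) := by
  simp only [sigmaF, transF, trichF, oneC, twoC, Formula.Realize,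
    BoundedFormula.realize_all, BoundedFormula.realize_ex,
    BoundedFormula.realize_imp, BoundedFormula.realize_inf,
    BoundedFormula.realize_sup, BoundedFormula.realize_bdEqual,
    realize_memB, realize_opMemB hS hP, realize_opMemFv hS hP,
    bvT, Term.realize_var, Sum.elim_inr, Fin.snoc_last, Fin.snoc_castSucc]

end Sentences


theorem add_two_lt_add_three (o : Ordinal.{0}) : o + 2 < o + 3 := by
  have h1 : o + 2 < o + 2 + 1 := by
    rw [Ordinal.add_one_eq_succ]
    exact Order.lt_succ _
  rwa [add_assoc o 2 1, two_add_one_eq_three] at h1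

/-- If κ is an ordinal and there is a transitive set W with κ ∈ W such that
V_κ ≺ W is a proper elementary extension, then κ is a strong limit cardinal. -/
theorem statement3 (κ : Ordinal.{0}) (W : ZFSet.{0}) (htrans : W.IsTransitive)
    (hκW : vN κ ∈ W) (helem : MemExt (Vrank κ) W.toSet) (hproper : Vrank κ ≠ W.toSet) :
    κ.card.IsStrongLimit ∧ κ.card.ord = κ := by
  classical
  obtain ⟨hWsub, hel⟩ := helem
  have hST : ∀ x ∈ Vrank κ, ∀ y ∈ x, y ∈ Vrank κ := fun x hx => Vrank_transitive hx
  have hTT : ∀ x ∈ W.toSet, ∀ y ∈ x, y ∈ W.toSet := by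
    intro x hx y hy
    change x ∈ W at hx
    change y ∈ W
    exact htrans x hx hy
  -- κ is not zero
  have hκ0 : κ ≠ 0 := by
    intro h
    have hT : (letI := strMem W.toSet;
        neF.Realize fun i => (⟨((fun i : Fin 0 => i.elim0 (α := ↥(Vrank κ))) i : ZFSet),
          hWsub ((fun i : Fin 0 => i.elim0 (α := ↥(Vrank κ))) i).2⟩ : W.toSet)) := by
      exact realize_neF.2 ⟨⟨vN κ, hκW⟩⟩
    have hs := (hel 0 neF (fun i => i.elim0)).2 hT
    obtain ⟨a⟩ := realize_neF.1 hs
    have ha : (a : ZFSet).rank < κ := a.2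
    exact not_lt_zero (lt_of_lt_of_le ha h.le)
  -- κ is a limit ordinal
  have hlim : ∀ α < κ, α + 1 < κ := by
    intro α hα
    have hv : vN α ∈ Vrank κ := by rw [mem_Vrank, rank_vN]; exact hα
    have hT : (letI := strMem W.toSet;
        limF.Realize fun i => (⟨((fun _ : Fin 1 => (⟨vN α, hv⟩ : ↥(Vrank κ))) i : ZFSet),
          hWsub ((fun _ : Fin 1 => (⟨vN α, hv⟩ : ↥(Vrank κ))) i).2⟩ : W.toSet)) := by
      refine realize_limF.2 ⟨⟨vN κ, hκW⟩, ?_⟩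
      exact vN_mem_vN hα
    have hs := (hel 1 limF (fun _ => ⟨vN α, hv⟩)).2 hT
    obtain ⟨z, hz⟩ := realize_limF.1 hs
    have h1 : α < (z : ZFSet).rank := by
      have := ZFSet.rank_lt_of_mem hz
      rwa [rank_vN] at this
    have h2 := z.2
    rw [mem_Vrank] at h2
    have h3 : α + 1 ≤ (z : ZFSet).rank := by
      rw [Ordinal.add_one_eq_succ]
      exact Order.succ_le_of_lt h1
    exact lt_of_le_of_lt h3 h2
  -- Vrank κ is closed under unordered pairs
  have hSP : ∀ x ∈ Vrank κ, ∀ y ∈ Vrank κ, ({x, y} : ZFSet) ∈ Vrank κ := by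
    intro x hx y hy
    rw [mem_Vrank] at hx hy ⊢
    rw [ZFSet.rank_pair, max_lt_iff]
    constructor
    · rw [Order.succ_eq_add_one]; exact hlim _ hx
    · rw [Order.succ_eq_add_one]; exact hlim _ hy
  -- W is closed under unordered pairs
  have hTP : ∀ x ∈ W.toSet, ∀ y ∈ W.toSet, ({x, y} : ZFSet) ∈ W.toSet := by
    have hsUp : (letI := strMem (Vrank κ);
        upairAx.Realize (fun i : Fin 0 => i.elim0 (α := ↥(Vrank κ)))) := by
      rw [realize_upairAx hST]
      intro a b
      exact ⟨⟨_, hSP _ a.2 _ b.2⟩, rfl⟩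
    have hTup := (hel 0 upairAx (fun i => i.elim0)).1 hsUp
    intro x hx y hy
    obtain ⟨u, hu⟩ := (realize_upairAx hTT).1 hTup ⟨x, hx⟩ ⟨y, hy⟩
    rw [← hu]
    exact u.2
  ----------------------------------------------------------------
  -- core cardinality lemma
  have core : ∀ β < κ, ¬ (κ.card ≤ 2 ^ β.card) := by
    intro β hβ hle
    -- an injection from κ.ToType into ZF sets of rank ≤ β
    have h2 : Cardinal.mk κ.ToType ≤ Cardinal.mk (Set β.ToType) := by
      rw [Cardinal.mk_set, Cardinal.mk_toType, Cardinal.mk_toType]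
      exact hle
    obtain ⟨emb⟩ := (Cardinal.le_def _ _).1 h2
    set eβ := Ordinal.ToType.mk (o := β) with heβ
    set code : Set β.ToType → ZFSet.{0} :=
      fun s => ZFSet.range (fun i : s => vN (eβ.symm i.1).1) with hcode
    have code_mem : ∀ (s : Set β.ToType) (x : ZFSet.{0}),
        x ∈ code s ↔ ∃ i : β.ToType, i ∈ s ∧ x = vN (eβ.symm i).1 := by
      intro s x
      rw [hcode, ZFSet.mem_range]
      constructor
      · rintro ⟨i, rfl⟩
        exact ⟨i.1, i.2, rfl⟩
      · rintro ⟨i, hi, rfl⟩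
        exact ⟨⟨i, hi⟩, rfl⟩
    have code_inj : Function.Injective code := by
      intro s t h
      ext i
      constructor
      · intro hi
        obtain ⟨j, hj, hij⟩ := (code_mem t (vN (eβ.symm i).1)).1
          (h ▸ (code_mem s _).2 ⟨i, hi, rfl⟩)
        have : eβ.symm i = eβ.symm j := Subtype.ext (vN_injective hij)
        rwa [eβ.symm.injective this]
      · intro hi
        obtain ⟨j, hj, hij⟩ := (code_mem s (vN (eβ.symm i).1)).1
          (h ▸ (code_mem t _).2 ⟨i, hi, rfl⟩)
        have : eβ.symm i = eβ.symm j := Subtype.ext (vN_injective hij)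
        rwa [eβ.symm.injective this]
    have code_rank : ∀ s, (code s).rank ≤ β := by
      intro s
      rw [ZFSet.rank_le_iff]
      intro y hy
      obtain ⟨i, _, rfl⟩ := (code_mem s y).1 hy
      rw [rank_vN]
      exact (eβ.symm i).2
    set G : κ.ToType → ZFSet.{0} := fun i => code (emb i) with hG
    have G_inj : Function.Injective G := fun i j h => emb.injective (code_inj h)
    have G_rank : ∀ i, (G i).rank ≤ β := fun i => code_rank _
    set e := Ordinal.ToType.mk (o := κ) with he
    set w : ZFSet.{0} := ZFSet.range
      (fun q : {q : κ.ToType × κ.ToType // q.1 < q.2} => ZFSet.pair (G q.1.1) (G q.1.2)) with hw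
    have w_mem : ∀ a b : ZFSet.{0},
        ZFSet.pair a b ∈ w ↔ ∃ i j : κ.ToType, i < j ∧ a = G i ∧ b = G j := by
      intro a b
      rw [hw, ZFSet.mem_range]
      constructor
      · rintro ⟨⟨⟨i, j⟩, hij⟩, hq⟩
        obtain ⟨h1, h2⟩ := ZFSet.pair_inj.1 hq
        exact ⟨i, j, hij, h1.symm, h2.symm⟩
      · rintro ⟨i, j, hij, rfl, rfl⟩
        exact ⟨⟨⟨i, j⟩, hij⟩, rfl⟩
    have hβ3 : β + 3 < κ := by
      have h1 := hlim _ hβ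
      have h2 := hlim _ h1
      have h3 := hlim _ h2
      have : β + 1 + 1 + 1 = β + 3 := by
        rw [add_assoc β 1 1, one_add_one_eq_two, add_assoc β 2 1, two_add_one_eq_three]
      rwa [this] at h3
    have w_rank : w ∈ Vrank κ := by
      rw [mem_Vrank]
      have hle3 : w.rank ≤ β + 3 := by
        rw [ZFSet.rank_le_iff]
        intro y hy
        rw [hw, ZFSet.mem_range] at hy
        obtain ⟨⟨⟨i, j⟩, hij⟩, rfl⟩ := hy
        have := rank_pair_le (x := G i) (y := G j)
        have hm : max (G i).rank (G j).rank + 2 ≤ β + 2 := by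
          apply add_le_add_left
          exact max_le (G_rank i) (G_rank j)
        calc (ZFSet.pair (G i) (G j)).rank ≤ β + 2 := le_trans this hm
          _ < β + 3 := add_two_lt_add_three β
      exact lt_of_le_of_lt hle3 hβ3
    -- Vrank κ satisfies σ(w)
    have hSsig : (letI := strMem (Vrank κ);
        sigmaF.Realize (fun _ : Fin 1 => (⟨w, w_rank⟩ : ↥(Vrank κ)))) := by
      rw [realize_sigmaF hST hSP]
      rintro d ⟨hdtr, hdtri⟩
      have hdord : ∃ δ, (d : ZFSet) = vN δ := by
        apply exists_eq_vN
        · intro y hy z hz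
          have hyS : y ∈ Vrank κ := hST _ d.2 y hy
          have hzS : z ∈ Vrank κ := hST _ hyS z hz
          exact hdtr ⟨z, hzS⟩ ⟨y, hyS⟩ ⟨hz, hy⟩
        · intro a ha b hb
          have haS : a ∈ Vrank κ := hST _ d.2 a ha
          have hbS : b ∈ Vrank κ := hST _ d.2 b hb
          rcases hdtri ⟨a, haS⟩ ⟨b, hbS⟩ ⟨ha, hb⟩ with h | h | h
          · exact Or.inl h
          · exact Or.inr (Or.inl (congrArg Subtype.val h))
          · exact Or.inr (Or.inr h)
      obtain ⟨δ, hd⟩ := hdord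
      have hδκ : δ < κ := by
        have hd2 := d.2
        rw [mem_Vrank, hd, rank_vN] at hd2
        exact hd2
      set eδ := Ordinal.ToType.mk (o := δ) with heδ
      set F : ZFSet.{0} := ZFSet.range (fun i : δ.ToType =>
        ZFSet.pair (vN (eδ.symm i).1)
          (G (e ⟨(eδ.symm i).1, Set.mem_Iio.mpr (lt_trans (Set.mem_Iio.mp (eδ.symm i).2) hδκ)⟩))) with hF
      have F_mem : ∀ z : ZFSet.{0}, z ∈ F ↔ ∃ ξ : Set.Iio δ,
          z = ZFSet.pair (vN ξ.1) (G (e ⟨ξ.1, Set.mem_Iio.mpr (lt_trans (Set.mem_Iio.mp ξ.2) hδκ)⟩)) := by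
        intro z
        rw [hF, ZFSet.mem_range]
        constructor
        · rintro ⟨i, rfl⟩
          exact ⟨eδ.symm i, rfl⟩
        · rintro ⟨ξ, rfl⟩
          refine ⟨eδ ξ, ?_⟩
          simp only [OrderIso.symm_apply_apply]
      have hxS : G (e ⟨δ, hδκ⟩) ∈ Vrank κ := by
        rw [mem_Vrank]
        exact lt_of_le_of_lt (G_rank _) hβ
      have hFS : F ∈ Vrank κ := by
        rw [mem_Vrank]
        have h1 : F.rank ≤ max δ β + 3 := by
          rw [ZFSet.rank_le_iff]
          intro y hy
          obtain ⟨ξ, rfl⟩ := (F_mem y).1 hy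
          refine lt_of_le_of_lt (le_trans rank_pair_le ?_) (add_two_lt_add_three (max δ β))
          apply add_le_add_left
          apply max_le
          · rw [rank_vN]
            exact le_max_of_le_left ξ.2.le
          · exact le_max_of_le_right (G_rank _)
        have h2 : max δ β + 3 < κ := by
          rcases max_cases δ β with ⟨hm, _⟩ | ⟨hm, _⟩
          · rw [hm]
            have h1 := hlim _ hδκ
            have h2 := hlim _ h1
            have h3 := hlim _ h2
            have : δ + 1 + 1 + 1 = δ + 3 := by
              rw [add_assoc δ 1 1, one_add_one_eq_two, add_assoc δ 2 1, two_add_one_eq_three]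
            rwa [this] at h3
          · rw [hm]; exact hβ3
        exact lt_of_le_of_lt h1 h2
      refine ⟨⟨_, hxS⟩, ⟨F, hFS⟩, ?_, ?_⟩
      · -- C1
        intro γ hγd
        rw [hd] at hγd
        obtain ⟨ξ, hξδ, hγ⟩ := mem_vN.1 hγd
        have hbS : G (e ⟨ξ, Set.mem_Iio.mpr (lt_trans hξδ hδκ)⟩) ∈ Vrank κ := by
          rw [mem_Vrank]
          exact lt_of_le_of_lt (G_rank _) hβ
        refine ⟨⟨_, hbS⟩, ?_, ?_⟩
        · rw [hγ]
          exact (F_mem _).2 ⟨⟨ξ, hξδ⟩, rfl⟩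
        · refine (w_mem _ _).2 ⟨_, _, ?_, rfl, rfl⟩
          rw [e.lt_iff_lt]
          exact hξδ
      · -- C2
        rintro γ γ' b b' ⟨hγγ', hγ'd, hγb, hγ'b'⟩
        obtain ⟨ξ, hξ⟩ := (F_mem _).1 hγb
        obtain ⟨ξ', hξ'⟩ := (F_mem _).1 hγ'b'
        obtain ⟨hγeq, hbeq⟩ := ZFSet.pair_inj.1 hξ
        obtain ⟨hγ'eq, hb'eq⟩ := ZFSet.pair_inj.1 hξ'
        rw [hγeq, hγ'eq, vN_mem_vN_iff] at hγγ'
        refine (w_mem _ _).2 ⟨_, _, ?_, hbeq, hb'eq⟩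
        rw [e.lt_iff_lt]
        exact hγγ'
    -- transfer to W
    have hTsig := (hel 1 sigmaF (fun _ => ⟨w, w_rank⟩)).1 hSsig
    have hTsig' : (letI := strMem W.toSet;
        sigmaF.Realize (fun _ : Fin 1 => (⟨w, hWsub w_rank⟩ : ↥W.toSet))) := hTsig
    rw [realize_sigmaF hTT hTP] at hTsig'
    have hκT : vN κ ∈ W.toSet := hκW
    have htr' : ∀ a b : ↥W.toSet, (a : ZFSet) ∈ (b : ZFSet) ∧
        (b : ZFSet) ∈ ((⟨vN κ, hκT⟩ : ↥W.toSet) : ZFSet) →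
        (a : ZFSet) ∈ ((⟨vN κ, hκT⟩ : ↥W.toSet) : ZFSet) := by
      rintro a b ⟨hab, hbκ⟩
      exact vN_transitive hbκ _ hab
    have htri' : ∀ a b : ↥W.toSet, (a : ZFSet) ∈ ((⟨vN κ, hκT⟩ : ↥W.toSet) : ZFSet) ∧
        (b : ZFSet) ∈ ((⟨vN κ, hκT⟩ : ↥W.toSet) : ZFSet) →
        (a : ZFSet) ∈ (b : ZFSet) ∨ a = b ∨ (b : ZFSet) ∈ (a : ZFSet) := by
      rintro a b ⟨haκ, hbκ⟩
      obtain ⟨ξ, hξ, ha⟩ := mem_vN.1 haκ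
      obtain ⟨η, hη, hb⟩ := mem_vN.1 hbκ
      rcases lt_trichotomy ξ η with h | h | h
      · exact Or.inl (by rw [ha, hb]; exact vN_mem_vN h)
      · refine Or.inr (Or.inl (Subtype.ext ?_))
        rw [ha, hb, h]
      · exact Or.inr (Or.inr (by rw [ha, hb]; exact vN_mem_vN h))
    obtain ⟨x, f, hC1, hC2⟩ := hTsig' ⟨vN κ, hκT⟩ ⟨htr', htri'⟩
    -- for each γ < κ pick the f-image
    have hκpos : (0 : Ordinal.{0}) < κ := pos_iff_ne_zero.2 hκ0
    have hchoice : ∀ γ : Set.Iio κ, ∃ b : ↥W.toSet,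
        ZFSet.pair (vN γ.1) (b : ZFSet) ∈ (f : ZFSet) ∧
          ZFSet.pair (b : ZFSet) (x : ZFSet) ∈ w := by
      intro γ
      have hγS : vN γ.1 ∈ Vrank κ := by rw [mem_Vrank, rank_vN]; exact γ.2
      exact hC1 ⟨vN γ.1, hWsub hγS⟩ (vN_mem_vN γ.2)
    choose bfun hb1 hb2 using hchoice
    have hpos : ∀ γ : Set.Iio κ, ∃ i j : κ.ToType,
        i < j ∧ (bfun γ : ZFSet) = G i ∧ (x : ZFSet) = G j :=
      fun γ => (w_mem _ _).1 (hb2 γ)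
    choose ifun jfun hij hbg hxg using hpos
    set γ0 : Set.Iio κ := ⟨0, hκpos⟩ with hγ0
    have hjconst : ∀ γ : Set.Iio κ, jfun γ = jfun γ0 := by
      intro γ
      apply G_inj
      rw [← hxg γ, ← hxg γ0]
    have hmono : ∀ γ γ' : Set.Iio κ, γ.1 < γ'.1 → ifun γ < ifun γ' := by
      intro γ γ' hlt
      have hγS : vN γ.1 ∈ Vrank κ := by rw [mem_Vrank, rank_vN]; exact γ.2
      have hγ'S : vN γ'.1 ∈ Vrank κ := by rw [mem_Vrank, rank_vN]; exact γ'.2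
      have h2 := hC2 ⟨vN γ.1, hWsub hγS⟩ ⟨vN γ'.1, hWsub hγ'S⟩ (bfun γ) (bfun γ')
        ⟨vN_mem_vN hlt, vN_mem_vN γ'.2, hb1 γ, hb1 γ'⟩
      obtain ⟨i, j, hij', hbi, hbj⟩ := (w_mem _ _).1 h2
      have e1 : ifun γ = i := G_inj (by rw [← hbg γ, hbi])
      have e2 : ifun γ' = j := G_inj (by rw [← hbg γ', hbj])
      rw [e1, e2]
      exact hij'
    set M : Set.Iio κ → Ordinal.{0} := fun γ => (e.symm (ifun γ)).1 with hM
    have hMmono : ∀ γ γ' : Set.Iio κ, γ.1 < γ'.1 → M γ < M γ' := by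
      intro γ γ' h
      have := hmono γ γ' h
      rw [hM]
      exact (e.symm.lt_iff_lt).2 this
    have hMbound : ∀ γ : Set.Iio κ, M γ < (e.symm (jfun γ0)).1 := by
      intro γ
      have h1 : ifun γ < jfun γ0 := by
        rw [← hjconst γ]
        exact hij γ
      exact (e.symm.lt_iff_lt).2 h1
    have hge : ∀ (o : Ordinal.{0}) (h : o < κ), o ≤ M ⟨o, h⟩ := by
      intro o
      induction o using Ordinal.induction with
      | _ o IH =>
        intro h
        by_contra hcon
        push_neg at hcon
        have ho' : M ⟨o, h⟩ < κ := (e.symm (ifun ⟨o, h⟩)).2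
        have h1 := IH (M ⟨o, h⟩) hcon ho'
        have h2 := hMmono ⟨M ⟨o, h⟩, ho'⟩ ⟨o, h⟩ hcon
        exact absurd (lt_of_le_of_lt h1 h2) (lt_irrefl _)
    set ζ : Set.Iio κ := ⟨(e.symm (jfun γ0)).1, (e.symm (jfun γ0)).2⟩ with hζ
    exact absurd (hge ζ.1 ζ.2) (not_le_of_gt (hMbound ζ))
  ----------------------------------------------------------------
  -- assemble the conclusion
  have hcard0 : κ.card ≠ 0 := fun h => hκ0 (Ordinal.card_eq_zero.1 h)
  have hord : κ.card.ord = κ := by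
    rcases lt_or_eq_of_le (Cardinal.ord_card_le κ) with h | h
    · exfalso
      have := core κ.card.ord h
      rw [Cardinal.card_ord] at this
      exact this (le_of_lt (Cardinal.cantor κ.card))
    · exact h
  refine ⟨⟨hcard0, ?_⟩, hord⟩
  intro μ hμ
  have h1 : μ.ord < κ := by
    calc μ.ord < κ.card.ord := Cardinal.ord_lt_ord.2 hμ
      _ ≤ κ := Cardinal.ord_card_le κ
  have h2 := core μ.ord h1
  rw [Cardinal.card_ord] at h2
  exact lt_of_not_ge h2

end SUP
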